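/- Let 0 < κ < a, set σ = √(1 − (κ/a)²), and assume (ab/π)·σ − (2/π)·arctan(κ/(aσ)) is a nonnegative integer. Let φ : ℝ → ℝ be continuously differentiable on ℝ, twice differentiable at every x ∉ {−b, 0}, satisfy −φ''(x) + V(x)φ(x) = −κ²φ(x) for all x ∉ {−b, 0}, and satisfy φ(x) = e^{−κx} for all x ≥ 0. Then φ is square-integrable on ℝ and the corresponding left norming constant satisfies c² := (∫_ℝ φ(x)² dx)^{−1} = 2κ(1 − (κ/a)²)/(2 + bκ). -/

import Mathlib

open MeasureTheory Set Filter Topology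

/-- Boundary value from the right: if `f` and `g` are continuous at `c` and agree on a
right-neighbourhood of `c`, they agree at `c`. -/
lemma bdry_eq_right {f g : ℝ → ℝ} {c : ℝ} {s : Set ℝ} (hf : ContinuousAt f c)
    (hg : ContinuousAt g c) (hs : s ∈ 𝓝[>] c) (h : ∀ x ∈ s, f x = g x) : f c = g c := by
  have h1 : Tendsto f (𝓝[>] c) (𝓝 (f c)) := hf.tendsto.mono_left nhdsWithin_le_nhds
  have h2 : Tendsto f (𝓝[>] c) (𝓝 (g c)) :=
    (hg.tendsto.mono_left nhdsWithin_le_nhds).congr'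
      (eventuallyEq_of_mem hs fun x hx => (h x hx).symm)
  exact tendsto_nhds_unique h1 h2

lemma hasDerivAt_exp_mul (c x : ℝ) :
    HasDerivAt (fun y => Real.exp (c * y)) (c * Real.exp (c * x)) x := by
  simpa [mul_comm, Function.comp_def] using (Real.hasDerivAt_exp (c * x)).comp x ((hasDerivAt_id x).const_mul c)

lemma integrableOn_exp_mul_Iic' {r : ℝ} (t : ℝ) (hr : 0 < r) :
    IntegrableOn (fun x => Real.exp (r * x)) (Iic t) := by
  rw [← Measure.map_neg_eq_self (volume : Measure ℝ)]
  have m : MeasurableEmbedding fun x : ℝ => -x := (Homeomorph.neg ℝ).measurableEmbedding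
  rw [m.integrableOn_map_iff]
  have hset : (fun x : ℝ => -x) ⁻¹' Iic t = Ici (-t) := by ext x; simp [neg_le]
  rw [hset]
  have base : IntegrableOn (fun x => Real.exp (-(r * x))) (Ici (-t)) := by
    have := exp_neg_integrableOn_Ioi (-t) hr
    simpa [neg_mul] using (integrableOn_Ici_iff_integrableOn_Ioi (by simp)).2 this
  exact base.congr_fun (fun x _ => by simp [Function.comp, neg_mul, mul_comm]) measurableSet_Ici

/-- The block (well) potential `V = −a²·χ_{[−b,0]}`, real-valued. -/
noncomputable def VblockR (a b : ℝ) (x : ℝ) : ℝ :=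
  if -b ≤ x ∧ x ≤ 0 then -a ^ 2 else 0

set_option maxHeartbeats 1600000 in
/-- For a bound state `−κ²` of the block potential, the eigenfunction normalized by
`φ(x) = e^{−κx}` for `x ≥ 0` is square-integrable and the left norming constant
satisfies `c² = (∫ φ²)⁻¹ = 2κ(1 − (κ/a)²)/(2 + bκ)`. -/
theorem block_norming_constant (a b : ℝ) (ha : 0 < a) (hb : 0 < b)
    (κ : ℝ) (hκ0 : 0 < κ) (hκa : κ < a)
    (σ : ℝ) (hσ : σ = Real.sqrt (1 - (κ / a) ^ 2))
    (hbound : ∃ m : ℕ,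
      a * b / Real.pi * σ - 2 / Real.pi * Real.arctan (κ / (a * σ)) = (m : ℝ))
    (φ : ℝ → ℝ) (hφ1 : ContDiff ℝ 1 φ)
    (hφ2 : ∀ x : ℝ, x ∉ ({-b, 0} : Set ℝ) → DifferentiableAt ℝ (deriv φ) x)
    (hφeq : ∀ x : ℝ, x ∉ ({-b, 0} : Set ℝ) →
      -(deriv (deriv φ) x) + VblockR a b x * φ x = -κ ^ 2 * φ x)
    (hφnorm : ∀ x : ℝ, 0 ≤ x → φ x = Real.exp (-κ * x)) :
    Integrable (fun x : ℝ => (φ x) ^ 2) ∧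
      (∫ x : ℝ, (φ x) ^ 2)⁻¹ = 2 * κ * (1 - (κ / a) ^ 2) / (2 + b * κ) := by
  obtain ⟨m, hm⟩ := hbound
  have h2κ : (0:ℝ) < 2 * κ := by positivity
  -- basic positivity facts
  have hka1 : (κ / a) ^ 2 < 1 := by
    have h1 : κ / a < 1 := (div_lt_one ha).2 hκa
    have h2 : 0 < κ / a := div_pos hκ0 ha
    exact pow_lt_one₀ h2.le h1 two_ne_zero
  have hσ0 : 0 < σ := hσ ▸ Real.sqrt_pos.2 (by linarith only [hka1])
  have hσ2 : σ ^ 2 = 1 - (κ / a) ^ 2 := hσ ▸ Real.sq_sqrt (by linarith only [hka1])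
  set ω := a * σ with hωdef
  have hω0 : 0 < ω := mul_pos ha hσ0
  have hω2 : ω ^ 2 = a ^ 2 - κ ^ 2 := by
    have : (a * σ) ^ 2 = a ^ 2 * σ ^ 2 := by ring
    rw [hωdef, this, hσ2]
    field_simp
  set t := κ / ω with htdef
  have ht0 : 0 < t := div_pos hκ0 hω0
  have hωt : ω * t = κ := by rw [htdef]; field_simp
  -- quantization condition
  have hbω : b * ω = 2 * Real.arctan t + m * Real.pi := by
    have hπ : Real.pi ≠ 0 := Real.pi_ne_zero
    have hm' : a * b * σ - 2 * Real.arctan t = m * Real.pi := by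
      field_simp at hm
      linarith only [hm]
    have hba : b * ω = a * b * σ := by rw [hωdef]; ring
    linarith only [hm', hba]
  -- trig values at the left edge of the well
  have h1t : (0:ℝ) < 1 + t ^ 2 := by positivity
  have harg : ω * b = 2 * Real.arctan t + (m : ℤ) * Real.pi := by
    push_cast; linarith only [hbω, mul_comm b ω]
  have hc2 : Real.cos (2 * Real.arctan t) = (1 - t ^ 2) / (1 + t ^ 2) := by
    rw [Real.cos_two_mul, Real.cos_sq_arctan]
    field_simp
    ring
  have hs2 : Real.sin (2 * Real.arctan t) = 2 * t / (1 + t ^ 2) := by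
    rw [Real.sin_two_mul, Real.sin_arctan, Real.cos_arctan]
    have hu : Real.sqrt (1 + t ^ 2) * Real.sqrt (1 + t ^ 2) = 1 + t ^ 2 :=
      Real.mul_self_sqrt (by positivity)
    field_simp
    rw [Real.sq_sqrt (by positivity)]
  set ε : ℝ := (-1 : ℝ) ^ m with hεdef
  have hε2 : ε ^ 2 = 1 := by
    rw [hεdef, ← pow_mul, mul_comm, pow_mul]
    norm_num
  have hcosb : Real.cos (ω * b) = ε * ((1 - t ^ 2) / (1 + t ^ 2)) := by
    rw [harg, Real.cos_add_int_mul_pi, hc2, zpow_natCast, hεdef, mul_comm]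
  have hsinb : Real.sin (ω * b) = ε * (2 * t / (1 + t ^ 2)) := by
    rw [harg, Real.sin_add_int_mul_pi, hs2, zpow_natCast, hεdef, mul_comm]
  -- the explicit solution inside the well and its derivative
  set ψ : ℝ → ℝ := fun x => Real.cos (ω * x) - t * Real.sin (ω * x) with hψdef
  set dψ : ℝ → ℝ := fun x => -ω * Real.sin (ω * x) - κ * Real.cos (ω * x) with hdψdef
  have hψcont : Continuous ψ := by fun_prop
  have hdψcont : Continuous dψ := by fun_prop
  have hψd : ∀ x, HasDerivAt ψ (dψ x) x := by
    intro x
    have h1 : HasDerivAt (fun y => Real.cos (ω * y)) (-Real.sin (ω * x) * ω) x :=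
      (Real.hasDerivAt_cos (ω * x)).comp x ((hasDerivAt_id x).const_mul ω) |>.congr_deriv
        (by ring)
    have h2 : HasDerivAt (fun y => Real.sin (ω * y)) (Real.cos (ω * x) * ω) x :=
      (Real.hasDerivAt_sin (ω * x)).comp x ((hasDerivAt_id x).const_mul ω) |>.congr_deriv
        (by ring)
    have := h1.sub (h2.const_mul t)
    refine this.congr_deriv ?_
    try simp only [hdψdef]
    rw [← hωt]; ring
  have hdψd : ∀ x, HasDerivAt dψ (-ω ^ 2 * ψ x) x := by
    intro x
    have h1 : HasDerivAt (fun y => Real.sin (ω * y)) (Real.cos (ω * x) * ω) x :=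
      (Real.hasDerivAt_sin (ω * x)).comp x ((hasDerivAt_id x).const_mul ω) |>.congr_deriv
        (by ring)
    have h2 : HasDerivAt (fun y => Real.cos (ω * y)) (-Real.sin (ω * x) * ω) x :=
      (Real.hasDerivAt_cos (ω * x)).comp x ((hasDerivAt_id x).const_mul ω) |>.congr_deriv
        (by ring)
    have := (h1.const_mul (-ω)).sub (h2.const_mul κ)
    refine this.congr_deriv ?_
    try simp only [hψdef]
    rw [← hωt]; ring
  have hψ0 : ψ 0 = 1 := by simp [hψdef]
  have hdψ0 : dψ 0 = -κ := by simp [hdψdef]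
  have hψb : ψ (-b) = ε := by
    simp only [hψdef, mul_neg, Real.cos_neg, Real.sin_neg]
    rw [hcosb, hsinb]
    field_simp
    ring
  have hdψb : dψ (-b) = ε * κ := by
    simp only [hdψdef, mul_neg, Real.cos_neg, Real.sin_neg]
    rw [hcosb, hsinb, ← hωt]
    field_simp
    ring
  -- Pythagoras-type identity for ψ
  have hpy : ∀ x, dψ x ^ 2 + ω ^ 2 * ψ x ^ 2 = a ^ 2 := by
    intro x
    have h := Real.sin_sq_add_cos_sq (ω * x)
    simp only [hψdef, hdψdef]
    have hκω : κ = ω * t := hωt.symm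
    rw [hκω] at hω2 ⊢
    linear_combination (ω ^ 2 + ω ^ 2 * t ^ 2) * h + hω2
  -- regularity facts
  have hφdiff : Differentiable ℝ φ := hφ1.differentiable one_ne_zero
  have hφcont : Continuous φ := hφdiff.continuous
  have hdφcont : Continuous (deriv φ) := hφ1.continuous_deriv le_rfl
  have hbneg : -b < (0:ℝ) := by linarith only [hb]
  -- value and derivative at 0
  have hφ0 : φ 0 = 1 := by simpa using hφnorm 0 le_rfl
  have hdφright : ∀ x ∈ Ioi (0:ℝ), deriv φ x = -κ * Real.exp (-κ * x) := by
    intro x hx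
    have hev : φ =ᶠ[𝓝 x] fun y => Real.exp (-κ * y) :=
      eventually_of_mem (Ioi_mem_nhds hx) fun y hy => hφnorm y (le_of_lt hy)
    rw [hev.deriv_eq]
    exact (hasDerivAt_exp_mul (-κ) x).deriv
  have hdφ0 : deriv φ 0 = -κ := by
    have := bdry_eq_right (f := deriv φ) (g := fun x => -κ * Real.exp (-κ * x))
      (hdφcont.continuousAt) (by fun_prop) self_mem_nhdsWithin hdφright
    simpa using this
  -- second derivative inside the well
  have hnotmem_mid : ∀ x ∈ Ioo (-b) (0:ℝ), x ∉ ({-b, 0} : Set ℝ) := by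
    intro x hx
    simp only [Set.mem_insert_iff, Set.mem_singleton_iff]
    push_neg
    exact ⟨ne_of_gt hx.1, ne_of_lt hx.2⟩
  have hD2mid : ∀ x ∈ Ioo (-b) (0:ℝ), HasDerivAt (deriv φ) (-ω ^ 2 * φ x) x := by
    intro x hx
    have hmem := hnotmem_mid x hx
    have h1 := (hφ2 x hmem).hasDerivAt
    have h2 := hφeq x hmem
    have hV : VblockR a b x = -a ^ 2 := if_pos ⟨le_of_lt hx.1, le_of_lt hx.2⟩
    rw [hV] at h2
    have hval : deriv (deriv φ) x = -ω ^ 2 * φ x := by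
      linear_combination -h2 + φ x * hω2
    exact hval ▸ h1
  have hD2left : ∀ x : ℝ, x < -b → HasDerivAt (deriv φ) (κ ^ 2 * φ x) x := by
    intro x hx
    have hmem : x ∉ ({-b, 0} : Set ℝ) := by
      simp only [Set.mem_insert_iff, Set.mem_singleton_iff]
      push_neg
      constructor <;> intro hc <;> linarith only [hc, hx, hb]
    have h1 := (hφ2 x hmem).hasDerivAt
    have h2 := hφeq x hmem
    have hV : VblockR a b x = 0 := if_neg (fun hcond => absurd hcond.1 (not_le.2 hx))
    rw [hV] at h2
    have hval : deriv (deriv φ) x = κ ^ 2 * φ x := by linear_combination -h2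
    exact hval ▸ h1
  -- Energy argument: φ = ψ on the well
  set E : ℝ → ℝ := fun x => (deriv φ x - dψ x) ^ 2 + ω ^ 2 * (φ x - ψ x) ^ 2 with hEdef
  have hEcont : Continuous E := by
    apply Continuous.add
    · exact (hdφcont.sub hdψcont).pow 2
    · exact continuous_const.mul ((hφcont.sub hψcont).pow 2)
  have hE0 : E 0 = 0 := by
    simp [hEdef, hφ0, hψ0, hdφ0, hdψ0]
  have hEderiv : ∀ x ∈ Ioo (-b) (0:ℝ), HasDerivAt E 0 x := by
    intro x hx
    have hφd : HasDerivAt φ (deriv φ x) x := (hφdiff x).hasDerivAt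
    have hA : HasDerivAt (fun y => (deriv φ y - dψ y) ^ 2)
        (2 * (deriv φ x - dψ x) * (-ω ^ 2 * φ x - -ω ^ 2 * ψ x)) x := by
      have := ((hD2mid x hx).sub (hdψd x)).pow 2
      simp at this; exact this.congr_deriv (by ring)
    have hB : HasDerivAt (fun y => (φ y - ψ y) ^ 2)
        (2 * (φ x - ψ x) * (deriv φ x - dψ x)) x := by
      have := (hφd.sub (hψd x)).pow 2
      simp at this; exact this
    have := hA.add (hB.const_mul (ω ^ 2))
    refine this.congr_deriv ?_
    ring
  have hEzero : ∀ x ∈ Ioo (-b) (0:ℝ), E x = 0 := by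
    intro x hx
    have hconst := constant_of_has_deriv_right_zero
      (f := E) (a := x) (b := 0)
      (hEcont.continuousOn)
      (fun y hy => (hEderiv y ⟨lt_of_lt_of_le hx.1 hy.1, hy.2⟩).hasDerivWithinAt)
    have := hconst 0 ⟨hx.2.le, le_rfl⟩
    rw [hE0] at this
    exact this.symm
  have hmid : ∀ x ∈ Ioo (-b) (0:ℝ), φ x = ψ x ∧ deriv φ x = dψ x := by
    intro x hx
    have h := hEzero x hx
    simp only [hEdef] at h
    have hsum := (add_eq_zero_iff_of_nonneg (sq_nonneg _) (by positivity)).1 h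
    have hA : deriv φ x = dψ x :=
      sub_eq_zero.1 (pow_eq_zero_iff (two_ne_zero) |>.1 hsum.1)
    have hB0 : (φ x - ψ x) ^ 2 = 0 :=
      (mul_eq_zero.1 hsum.2).resolve_left (pow_ne_zero 2 hω0.ne')
    have hB : φ x = ψ x := sub_eq_zero.1 (pow_eq_zero_iff (two_ne_zero) |>.1 hB0)
    exact ⟨hB, hA⟩
  have hIoo_mem : Ioo (-b) (0:ℝ) ∈ 𝓝[>] (-b) :=
    inter_mem self_mem_nhdsWithin (mem_nhdsWithin_of_mem_nhds (Iio_mem_nhds hbneg))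
  have hφmb : φ (-b) = ε := by
    have := bdry_eq_right (f := φ) (g := ψ) hφcont.continuousAt hψcont.continuousAt
      hIoo_mem (fun x hx => (hmid x hx).1)
    rw [this, hψb]
  have hdφmb : deriv φ (-b) = ε * κ := by
    have := bdry_eq_right (f := deriv φ) (g := dψ) hdφcont.continuousAt hdψcont.continuousAt
      hIoo_mem (fun x hx => (hmid x hx).2)
    rw [this, hdψb]
  have hmidIcc : ∀ x ∈ Icc (-b) (0:ℝ), φ x = ψ x := by
    intro x hx
    rcases eq_or_lt_of_le hx.1 with h | h
    · rw [← h, hφmb, hψb]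
    rcases eq_or_lt_of_le hx.2 with h' | h'
    · rw [h', hφ0, hψ0]
    exact (hmid x ⟨h, h'⟩).1
  -- Left region: φ x = ε e^{κ(x+b)}
  set h : ℝ → ℝ := fun x => Real.exp (-κ * x) * (deriv φ x + κ * φ x)
    - 2 * ε * κ * Real.exp (κ * b) with hhdef
  have hhcont : Continuous h := by fun_prop
  have hhmb : h (-b) = 0 := by
    simp only [hhdef, hdφmb, hφmb]
    rw [show -κ * -b = κ * b by ring]
    ring
  have hhd : ∀ x : ℝ, x < -b → HasDerivAt h 0 x := by
    intro x hx
    have he := hasDerivAt_exp_mul (-κ) x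
    have hin : HasDerivAt (fun y => deriv φ y + κ * φ y)
        (κ ^ 2 * φ x + κ * deriv φ x) x :=
      (hD2left x hx).add (((hφdiff x).hasDerivAt).const_mul κ)
    have := (he.mul hin).sub_const (2 * ε * κ * Real.exp (κ * b))
    refine this.congr_deriv ?_
    ring
  have hhzero : ∀ x : ℝ, x ≤ -b → h x = 0 := by
    intro x hx
    rcases eq_or_lt_of_le hx with h' | h'
    · rw [h']; exact hhmb
    have hconst := constant_of_has_deriv_right_zero
      (f := h) (a := x) (b := -b)
      (hhcont.continuousOn)
      (fun y hy => (hhd y hy.2).hasDerivWithinAt)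
    have := hconst (-b) ⟨hx, le_rfl⟩
    rw [hhmb] at this
    exact this.symm
  have hplus : ∀ x : ℝ, x ≤ -b →
      deriv φ x + κ * φ x = 2 * ε * κ * Real.exp (κ * (x + b)) := by
    intro x hx
    have h0 := hhzero x hx
    simp only [hhdef] at h0
    have hmulexp : Real.exp (κ * b) = Real.exp (-κ * x) * Real.exp (κ * (x + b)) := by
      rw [← Real.exp_add]; ring_nf
    rw [hmulexp] at h0
    have h2' : Real.exp (-κ * x) * (deriv φ x + κ * φ x)
        = Real.exp (-κ * x) * (2 * ε * κ * Real.exp (κ * (x + b))) := by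
      linear_combination h0
    exact mul_left_cancel₀ (Real.exp_ne_zero _) h2'
  set k : ℝ → ℝ := fun x => Real.exp (κ * x) * φ x - ε * Real.exp (κ * (2 * x + b)) with hkdef
  have hkcont : Continuous k := by fun_prop
  have hkmb : k (-b) = 0 := by
    simp only [hkdef, hφmb]
    rw [show κ * (2 * -b + b) = κ * -b by ring]
    ring
  have hkd : ∀ x : ℝ, x < -b → HasDerivAt k 0 x := by
    intro x hx
    have he := hasDerivAt_exp_mul κ x
    have hφd : HasDerivAt φ (deriv φ x) x := (hφdiff x).hasDerivAt
    have he2 : HasDerivAt (fun y => Real.exp (κ * (2 * y + b)))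
        (2 * κ * Real.exp (κ * (2 * x + b))) x := by
      have hinner : HasDerivAt (fun y : ℝ => κ * (2 * y + b)) (κ * 2) x := by
        simpa using (((hasDerivAt_id x).const_mul 2).add_const b).const_mul κ
      have := (Real.hasDerivAt_exp (κ * (2 * x + b))).comp x hinner
      refine this.congr_deriv ?_
      ring
    have := (he.mul hφd).sub (he2.const_mul ε)
    refine this.congr_deriv ?_; symm
    have hpl := hplus x hx.le
    have hexpsplit : Real.exp (κ * x) * Real.exp (κ * (x + b)) = Real.exp (κ * (2 * x + b)) := by
      rw [← Real.exp_add]; ring_nf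
    linear_combination (-Real.exp (κ * x)) * hpl - 2 * ε * κ * hexpsplit
  have hkzero : ∀ x : ℝ, x ≤ -b → k x = 0 := by
    intro x hx
    rcases eq_or_lt_of_le hx with h' | h'
    · rw [h']; exact hkmb
    have hconst := constant_of_has_deriv_right_zero
      (f := k) (a := x) (b := -b)
      (hkcont.continuousOn)
      (fun y hy => (hkd y hy.2).hasDerivWithinAt)
    have := hconst (-b) ⟨hx, le_rfl⟩
    rw [hkmb] at this
    exact this.symm
  have hleft : ∀ x : ℝ, x ≤ -b → φ x = ε * Real.exp (κ * (x + b)) := by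
    intro x hx
    have h0 := hkzero x hx
    simp only [hkdef] at h0
    have hexp : Real.exp (κ * x) ≠ 0 := Real.exp_ne_zero _
    have hsplit : Real.exp (κ * (2 * x + b)) = Real.exp (κ * x) * Real.exp (κ * (x + b)) := by
      rw [← Real.exp_add]; ring_nf
    rw [hsplit] at h0
    have : Real.exp (κ * x) * (φ x - ε * Real.exp (κ * (x + b))) = 0 := by linear_combination h0
    rcases mul_eq_zero.1 this with hc | hc
    · exact absurd hc hexp
    · linarith only [hc]
  -- Integrability of φ² on the three regions
  have hIright : IntegrableOn (fun x => φ x ^ 2) (Ici (0:ℝ)) := by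
    have base0 := exp_neg_integrableOn_Ioi (0:ℝ) h2κ
    have base : IntegrableOn (fun x => Real.exp (-(2 * κ) * x)) (Ici (0:ℝ)) :=
      (integrableOn_Ici_iff_integrableOn_Ioi (by simp)).2 (by simpa [neg_mul] using base0)
    refine base.congr_fun (fun x hx => ?_) measurableSet_Ici
    rw [hφnorm x hx, ← Real.exp_nat_mul]
    norm_num
    ring_nf
  have hIleft : IntegrableOn (fun x => φ x ^ 2) (Iic (-b)) := by
    have base : IntegrableOn (fun x => Real.exp (2 * κ * b) * Real.exp (2 * κ * x)) (Iic (-b)) :=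
      (integrableOn_exp_mul_Iic' (-b) h2κ).const_mul _
    refine base.congr_fun (fun x hx => ?_) measurableSet_Iic
    dsimp only; symm
    rw [hleft x hx, mul_pow, hε2, one_mul, ← Real.exp_nat_mul, ← Real.exp_add]
    norm_num
    ring_nf
  have hImid : IntegrableOn (fun x => φ x ^ 2) (Icc (-b) 0) :=
    ((hφcont.pow 2).continuousOn).integrableOn_Icc
  have hIocmid : IntegrableOn (fun x => φ x ^ 2) (Ioc (-b) 0) :=
    hImid.mono_set Ioc_subset_Icc_self
  have hIoiright : IntegrableOn (fun x => φ x ^ 2) (Ioi (0:ℝ)) :=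
    hIright.mono_set Ioi_subset_Ici_self
  have hIoiTotal : IntegrableOn (fun x => φ x ^ 2) (Ioi (-b)) := by
    rw [← Set.Ioc_union_Ioi_eq_Ioi hbneg.le]
    exact hIocmid.union hIoiright
  have hInt : Integrable (fun x : ℝ => φ x ^ 2) := by
    rw [← integrableOn_univ, ← Set.Iic_union_Ioi (a := -b)]
    exact hIleft.union hIoiTotal
  refine ⟨hInt, ?_⟩
  -- Values of the three integrals
  have hvalR : ∫ x in Ioi (0:ℝ), φ x ^ 2 = 1 / (2 * κ) := by
    have heq : ∀ x ∈ Ioi (0:ℝ), φ x ^ 2 = Real.exp (-(2 * κ) * x) := by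
      intro x hx
      rw [hφnorm x (le_of_lt hx), ← Real.exp_nat_mul]
      norm_num
      ring_nf
    rw [setIntegral_congr_fun measurableSet_Ioi heq]
    have hF : ∀ x ∈ Ioi (0:ℝ), HasDerivAt (fun y => -Real.exp (-(2 * κ) * y) / (2 * κ))
        (Real.exp (-(2 * κ) * x)) x := by
      intro x _
      have := ((hasDerivAt_exp_mul (-(2 * κ)) x).neg).div_const (2 * κ)
      refine this.congr_deriv ?_; symm
      field_simp
    have hint : IntegrableOn (fun x => Real.exp (-(2 * κ) * x)) (Ioi (0:ℝ)) := by
      simpa [neg_mul] using exp_neg_integrableOn_Ioi (0:ℝ) h2κ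
    have htends : Tendsto (fun y => -Real.exp (-(2 * κ) * y) / (2 * κ)) atTop (𝓝 0) := by
      have h1 : Tendsto (fun y : ℝ => -(2 * κ) * y) atTop atBot :=
        (tendsto_const_mul_atBot_of_neg (by linarith only [h2κ])).2 tendsto_id
      have h2 : Tendsto (fun y => Real.exp (-(2 * κ) * y)) atTop (𝓝 0) :=
        Real.tendsto_exp_atBot.comp h1
      have := (h2.neg).div_const (2 * κ)
      simpa using this
    have := integral_Ioi_of_hasDerivAt_of_tendsto
      (Continuous.continuousWithinAt (by fun_prop)) hF hint htends
    rw [this]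
    simp only [mul_zero, Real.exp_zero]
    ring
  have hvalL : ∫ x in Iic (-b), φ x ^ 2 = 1 / (2 * κ) := by
    have heq : ∀ x ∈ Iic (-b), φ x ^ 2 =
        Real.exp (2 * κ * b) * Real.exp (2 * κ * x) := by
      intro x hx
      rw [hleft x hx, mul_pow, hε2, one_mul, ← Real.exp_nat_mul, ← Real.exp_add]
      norm_num
      ring_nf
    rw [setIntegral_congr_fun measurableSet_Iic heq]
    have hF : ∀ x ∈ Iio (-b), HasDerivAt
        (fun y => Real.exp (2 * κ * b) * Real.exp (2 * κ * y) / (2 * κ))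
        (Real.exp (2 * κ * b) * Real.exp (2 * κ * x)) x := by
      intro x _
      have := ((hasDerivAt_exp_mul (2 * κ) x).const_mul (Real.exp (2 * κ * b))).div_const (2 * κ)
      refine this.congr_deriv ?_; symm
      field_simp
    have hint : IntegrableOn (fun x => Real.exp (2 * κ * b) * Real.exp (2 * κ * x)) (Iic (-b)) :=
      (integrableOn_exp_mul_Iic' (-b) h2κ).const_mul _
    have htends : Tendsto (fun y => Real.exp (2 * κ * b) * Real.exp (2 * κ * y) / (2 * κ))
        atBot (𝓝 0) := by
      have h1 : Tendsto (fun y : ℝ => 2 * κ * y) atBot atBot :=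
        (tendsto_const_mul_atBot_of_pos (by positivity)).2 tendsto_id
      have h2 : Tendsto (fun y => Real.exp (2 * κ * y)) atBot (𝓝 0) :=
        Real.tendsto_exp_atBot.comp h1
      have := ((h2.const_mul (Real.exp (2 * κ * b)))).div_const (2 * κ)
      simpa using this
    have := integral_Iic_of_hasDerivAt_of_tendsto
      (Continuous.continuousWithinAt (by fun_prop)) hF hint htends
    rw [this]
    rw [show 2 * κ * -b = -(2 * κ * b) by ring, ← Real.exp_add]
    simp
  have hvalM : ∫ x in Ioc (-b) (0:ℝ), φ x ^ 2 = (a ^ 2 * b + 2 * κ) / (2 * ω ^ 2) := by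
    have heq : ∀ x ∈ Ioc (-b) (0:ℝ), φ x ^ 2 = ψ x ^ 2 := by
      intro x hx
      rw [hmidIcc x ⟨le_of_lt hx.1, hx.2⟩]
    rw [setIntegral_congr_fun measurableSet_Ioc heq]
    have hFTC : ∫ x in (-b)..(0:ℝ), ψ x ^ 2 =
        (a ^ 2 * 0 - ψ 0 * dψ 0) / (2 * ω ^ 2) -
        (a ^ 2 * (-b) - ψ (-b) * dψ (-b)) / (2 * ω ^ 2) := by
      refine intervalIntegral.integral_eq_sub_of_hasDerivAt
        (f := fun x => (a ^ 2 * x - ψ x * dψ x) / (2 * ω ^ 2)) (fun x _ => ?_)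
        ((hψcont.pow 2).intervalIntegrable _ _)
      have hd : HasDerivAt (fun y => a ^ 2 * y - ψ y * dψ y)
          (a ^ 2 - (dψ x * dψ x + ψ x * (-ω ^ 2 * ψ x))) x := by
        have h1 : HasDerivAt (fun y : ℝ => a ^ 2 * y) (a ^ 2) x := by
          simpa using (hasDerivAt_id x).const_mul (a ^ 2)
        exact h1.sub ((hψd x).mul (hdψd x))
      have := hd.div_const (2 * ω ^ 2)
      refine this.congr_deriv ?_; symm
      rw [eq_div_iff (by positivity : (0:ℝ) < 2 * ω ^ 2).ne']
      linear_combination hpy x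
    rw [← intervalIntegral.integral_of_le hbneg.le, hFTC]
    rw [hψ0, hdψ0, hψb, hdψb]
    have hεκ : ε * (ε * κ) = κ := by linear_combination κ * hε2
    rw [hεκ]
    field_simp
    ring
  -- Assemble
  have hsplit2 : ∫ x in Ioi (-b), φ x ^ 2 =
      (∫ x in Ioc (-b) (0:ℝ), φ x ^ 2) + ∫ x in Ioi (0:ℝ), φ x ^ 2 := by
    rw [← Set.Ioc_union_Ioi_eq_Ioi hbneg.le]
    exact setIntegral_union (Set.Ioc_disjoint_Ioi le_rfl) measurableSet_Ioi hIocmid hIoiright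
  have htotal : ∫ x : ℝ, φ x ^ 2 =
      1 / (2 * κ) + ((a ^ 2 * b + 2 * κ) / (2 * ω ^ 2) + 1 / (2 * κ)) := by
    rw [← intervalIntegral.integral_Iic_add_Ioi hIleft hIoiTotal, hsplit2, hvalL, hvalM, hvalR]
  rw [htotal]
  have haκ2 : (0:ℝ) < a ^ 2 - κ ^ 2 := by
    have := mul_pos (by linarith only [hκa] : (0:ℝ) < a - κ) (by linarith only [hκ0, hκa] : (0:ℝ) < a + κ)
    linarith only [this]
  have hsum : 1 / (2 * κ) + ((a ^ 2 * b + 2 * κ) / (2 * ω ^ 2) + 1 / (2 * κ)) =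
      a ^ 2 * (2 + b * κ) / (2 * κ * ω ^ 2) := by
    rw [hω2]
    field_simp
    ring
  rw [hsum]
  have h1ka : 1 - (κ / a) ^ 2 = ω ^ 2 / a ^ 2 := by
    rw [hω2]
    field_simp
  rw [h1ka, inv_div]
  field_simp
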